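/- For exponential-weights sampling distributions built from two cumulative loss vectors, the ℓ¹ distance of the induced probability distributions is bounded by the learning rate times the ℓ¹ distance of the loss vectors over 2. That is, if p̂_a = exp(−η L̂_a)/∑_k exp(−η L̂_k) and p_a = exp(−η L_a)/∑_k exp(−η L_k) for cumulative loss vectors L̂, L ∈ ℝ^n and learning rate η > 0, then ∑_a |p̂_a − p_a| ≤ (η/2) ∑_a |L̂_a − L_a|. -/

import Mathlib

open Finset Real
open scoped NNReal ENNReal

lemma sigmoid_abs_sub_le (S : ℝ) (hS : 0 ≤ S) (a b : ℝ) :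
    |Real.exp a / (Real.exp a + S) - Real.exp b / (Real.exp b + S)| ≤ |a - b| / 4 := by
  have hpos : ∀ x : ℝ, 0 < Real.exp x + S := fun x =>
    add_pos_of_pos_of_nonneg (Real.exp_pos x) hS
  have hd : ∀ x : ℝ, HasDerivAt (fun t => Real.exp t / (Real.exp t + S))
      (Real.exp x * S / (Real.exp x + S) ^ 2) x := by
    intro x
    have h := (Real.hasDerivAt_exp x).div ((Real.hasDerivAt_exp x).add_const S) (hpos x).ne'
    exact h.congr_deriv (by ring)
  have hlip : LipschitzWith (1/4 : ℝ≥0) (fun t => Real.exp t / (Real.exp t + S)) := by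
    apply lipschitzWith_of_nnnorm_deriv_le (fun x => (hd x).differentiableAt)
    intro x
    rw [(hd x).deriv]
    have hb : Real.exp x * S / (Real.exp x + S) ^ 2 ≤ 1/4 := by
      rw [div_le_iff₀ (by positivity)]
      nlinarith [sq_nonneg (Real.exp x - S)]
    have hnn : 0 ≤ Real.exp x * S / (Real.exp x + S) ^ 2 := by positivity
    rw [← NNReal.coe_le_coe, coe_nnnorm, Real.norm_eq_abs, abs_of_nonneg hnn]
    push_cast
    linarith
  have h := hlip.dist_le_mul a b
  rw [Real.dist_eq, Real.dist_eq] at h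
  refine le_trans h (le_of_eq ?_)
  push_cast
  ring

lemma term_eq (c P Q : ℝ) (hc : 0 < c) :
    |c / P - c / Q| = c * |1 / P - 1 / Q| := by
  have h : c / P - c / Q = c * (1 / P - 1 / Q) := by ring
  rw [h, abs_mul, abs_of_pos hc]

lemma key_eq (s t S : ℝ) (hs : 0 < s) (ht : 0 < t) (hS : 0 ≤ S) :
    S * |1/(s+S) - 1/(t+S)| = |s/(s+S) - t/(t+S)| := by
  have hs' : s + S ≠ 0 := (add_pos_of_pos_of_nonneg hs hS).ne'
  have ht' : t + S ≠ 0 := (add_pos_of_pos_of_nonneg ht hS).ne'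
  have e1 : 1/(s+S) - 1/(t+S) = (t - s)/((s+S)*(t+S)) := by field_simp; try ring
  have e2 : s/(s+S) - t/(t+S) = (S*(s-t))/((s+S)*(t+S)) := by field_simp; try ring
  rw [e1, e2, abs_div, abs_div, abs_mul S (s-t), abs_of_nonneg hS, abs_sub_comm s t]
  ring

lemma combine (S : ℝ) (hS : 0 ≤ S) (a b : ℝ) :
    |Real.exp a/(Real.exp a+S) - Real.exp b/(Real.exp b+S)|
      + S * |1/(Real.exp a+S) - 1/(Real.exp b+S)| ≤ (1/2) * |a - b| := by
  have hkey := key_eq (Real.exp a) (Real.exp b) S (Real.exp_pos a) (Real.exp_pos b) hS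
  have hsig := sigmoid_abs_sub_le S hS a b
  rw [hkey]
  linarith

lemma softmax_single_coord (n : ℕ) (x y : Fin n → ℝ) (i : Fin n)
    (h : ∀ a, a ≠ i → x a = y a) :
    ∑ a, |Real.exp (x a) / (∑ k, Real.exp (x k)) - Real.exp (y a) / (∑ k, Real.exp (y k))|
      ≤ (1/2) * |x i - y i| := by
  classical
  have hS : (0:ℝ) ≤ ∑ a ∈ Finset.univ.erase i, Real.exp (x a) :=
    Finset.sum_nonneg fun a _ => (Real.exp_pos _).le
  have hZx : ∑ k, Real.exp (x k) = Real.exp (x i) + ∑ a ∈ Finset.univ.erase i, Real.exp (x a) :=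
    (Finset.add_sum_erase _ _ (Finset.mem_univ i)).symm
  have hsame : ∑ a ∈ Finset.univ.erase i, Real.exp (y a)
      = ∑ a ∈ Finset.univ.erase i, Real.exp (x a) :=
    Finset.sum_congr rfl fun a ha => by rw [h a (Finset.ne_of_mem_erase ha)]
  have hZy : ∑ k, Real.exp (y k) = Real.exp (y i) + ∑ a ∈ Finset.univ.erase i, Real.exp (x a) := by
    rw [← Finset.add_sum_erase _ (fun k => Real.exp (y k)) (Finset.mem_univ i), hsame]
  have herase : ∑ a ∈ Finset.univ.erase i,
      |Real.exp (x a) / (∑ k, Real.exp (x k)) - Real.exp (y a) / (∑ k, Real.exp (y k))|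
      = (∑ a ∈ Finset.univ.erase i, Real.exp (x a))
        * |1 / (∑ k, Real.exp (x k)) - 1 / (∑ k, Real.exp (y k))| := by
    rw [Finset.sum_mul]
    refine Finset.sum_congr rfl fun a ha => ?_
    rw [← h a (Finset.ne_of_mem_erase ha), term_eq _ _ _ (Real.exp_pos (x a))]
  rw [← Finset.add_sum_erase _ _ (Finset.mem_univ i), herase, hZx, hZy]
  generalize hgen : (∑ a ∈ Finset.univ.erase i, Real.exp (x a)) = S at hS ⊢
  exact combine S hS (x i) (y i)

lemma softmax_l1_lipschitz (n : ℕ) (x y : Fin n → ℝ) :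
    ∑ a, |Real.exp (x a) / (∑ k, Real.exp (x k)) - Real.exp (y a) / (∑ k, Real.exp (y k))|
      ≤ (1/2) * ∑ a, |x a - y a| := by
  classical
  set T : (Fin n → ℝ) → PiLp 1 (fun _ : Fin n => ℝ) := fun v =>
    (WithLp.equiv 1 _).symm (fun a => Real.exp (v a) / ∑ k, Real.exp (v k)) with hT
  have hdist : ∀ u v : Fin n → ℝ, dist (T u) (T v)
      = ∑ a, |Real.exp (u a) / (∑ k, Real.exp (u k)) - Real.exp (v a) / (∑ k, Real.exp (v k))| := by
    intro u v
    rw [PiLp.dist_eq_sum (p := (1 : ℝ≥0∞)) (by norm_num)]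
    simp [hT, WithLp.equiv_symm_apply, PiLp.toLp_apply, Real.dist_eq, ENNReal.toReal_one, Real.rpow_one]
  set F : ℕ → (Fin n → ℝ) := fun k a => if (a : ℕ) < k then y a else x a with hF
  have h0 : F 0 = x := funext fun a => if_neg (Nat.not_lt_zero _)
  have hn : F n = y := funext fun a => if_pos a.isLt
  set B : ℕ → ℝ := fun m => if hm : m < n then (1/2) * |x ⟨m, hm⟩ - y ⟨m, hm⟩| else 0 with hB
  have hstep : ∀ k ∈ Finset.range n, dist (T (F k)) (T (F (k+1))) ≤ B k := by
    intro k hk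
    have hkn : k < n := Finset.mem_range.mp hk
    have hagree : ∀ a, a ≠ (⟨k, hkn⟩ : Fin n) → F k a = F (k+1) a := by
      intro a ha
      have hv : (a : ℕ) ≠ k := by simpa [Fin.ext_iff] using ha
      have hiff : ((a : ℕ) < k) = ((a : ℕ) < k + 1) := by
        apply propext; omega
      simp only [hF, hiff]
    have h1 : F k ⟨k, hkn⟩ = x ⟨k, hkn⟩ := if_neg (lt_irrefl k)
    have h2 : F (k+1) ⟨k, hkn⟩ = y ⟨k, hkn⟩ := if_pos (Nat.lt_succ_self k)
    rw [hdist, hB]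
    simp only [hkn, dif_pos]
    have hb := softmax_single_coord n (F k) (F (k+1)) ⟨k, hkn⟩ hagree
    rwa [h1, h2] at hb
  have htel := dist_le_range_sum_dist (fun k => T (F k)) n
  rw [h0, hn] at htel
  have hBsum : ∑ k ∈ Finset.range n, B k = (1/2) * ∑ a, |x a - y a| := by
    rw [← Fin.sum_univ_eq_sum_range B n, Finset.mul_sum]
    refine Finset.sum_congr rfl fun a _ => ?_
    simp [hB, a.isLt]
  calc ∑ a, |Real.exp (x a) / (∑ k, Real.exp (x k)) - Real.exp (y a) / (∑ k, Real.exp (y k))|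
      = dist (T x) (T y) := (hdist x y).symm
    _ ≤ ∑ k ∈ Finset.range n, dist (T (F k)) (T (F (k+1))) := htel
    _ ≤ ∑ k ∈ Finset.range n, B k := Finset.sum_le_sum hstep
    _ = (1/2) * ∑ a, |x a - y a| := hBsum

theorem exp_weights_l1_perturbation
    (n : ℕ) (η : ℝ) (hη : 0 < η) (Lhat L : Fin n → ℝ) :
    ∑ a, |Real.exp (-η * Lhat a) / (∑ k, Real.exp (-η * Lhat k))
          - Real.exp (-η * L a) / (∑ k, Real.exp (-η * L k))|
      ≤ (η / 2) * ∑ a, |Lhat a - L a| := by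
  have h := softmax_l1_lipschitz n (fun a => -η * Lhat a) (fun a => -η * L a)
  refine h.trans (le_of_eq ?_)
  rw [Finset.mul_sum, Finset.mul_sum]
  refine Finset.sum_congr rfl fun a _ => ?_
  rw [show -η * Lhat a - -η * L a = -η * (Lhat a - L a) by ring, abs_mul, abs_neg,
    abs_of_pos hη]
  ring
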